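/- Let m be a positive integer and let w_j = a_j + i·v_j for j = 1, …, m with a_j < 0 and with v_1, …, v_m pairwise distinct positive real numbers. Then the matrix G ∈ ℝ^{m×m} with entries G_{j,k} = ∫₀^∞ Re(e^{w_j s}) Re(e^{w_k s}) ds is symmetric positive definite. -/

import Mathlib

open MeasureTheory Complex Finset

lemma expDeriv (μ : ℂ) (s : ℝ) :
    HasDerivAt (fun s : ℝ => Complex.exp (μ * s)) (μ * Complex.exp (μ * s)) s := by
  have h1 : HasDerivAt (fun s : ℝ => (s : ℂ)) 1 s := Complex.ofRealCLM.hasDerivAt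
  simpa [mul_comm] using (h1.const_mul μ).cexp

lemma iterDeriv {n : ℕ} (μ c : Fin n → ℂ) (k : ℕ) :
    iteratedDeriv k (fun s : ℝ => ∑ i, c i * Complex.exp (μ i * s)) =
      fun s : ℝ => ∑ i, c i * μ i ^ k * Complex.exp (μ i * s) := by
  induction k with
  | zero => simp
  | succ k ih =>
    rw [iteratedDeriv_succ, ih]
    funext s
    have : HasDerivAt (fun s : ℝ => ∑ i, c i * μ i ^ k * Complex.exp (μ i * s))
        (∑ i, c i * μ i ^ (k+1) * Complex.exp (μ i * s)) s := by
      exact HasDerivAt.fun_sum (fun i _ => by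
        have := (expDeriv (μ i) s).const_mul (c i * μ i ^ k)
        exact this.congr_deriv (by ring))
    exact this.deriv

lemma evIter {f g : ℝ → ℂ} {x : ℝ} (h : f =ᶠ[nhds x] g) (k : ℕ) :
    iteratedDeriv k f x = iteratedDeriv k g x := by
  induction k generalizing f g h with
  | zero => simpa using h.eq_of_nhds
  | succ k ih =>
    rw [iteratedDeriv_succ', iteratedDeriv_succ']
    exact ih (h.deriv)

lemma iterZero (k : ℕ) : iteratedDeriv k (0 : ℝ → ℂ) = 0 := by
  induction k with
  | zero => rfl
  | succ k ih =>
    rw [iteratedDeriv_succ, ih]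
    funext x
    exact deriv_const x 0

lemma indepFin {n : ℕ} (μ c : Fin n → ℂ) (hμ : Function.Injective μ)
    (h : ∀ s ∈ Set.Ioi (0:ℝ), ∑ i, c i * Complex.exp (μ i * s) = 0) : c = 0 := by
  have hev : (fun s : ℝ => ∑ i, c i * Complex.exp (μ i * s)) =ᶠ[nhds 1] (0 : ℝ → ℂ) := by
    filter_upwards [Ioi_mem_nhds (by norm_num : (0:ℝ) < 1)] with s hs using h s hs
  have key : ∀ k : ℕ, ∑ i, c i * μ i ^ k * Complex.exp (μ i * (1:ℝ)) = 0 := by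
    intro k
    have := evIter hev k
    rw [iterDeriv] at this
    rw [iterZero k] at this
    simpa using this
  have hd : (fun i => c i * Complex.exp (μ i * (1:ℝ))) = 0 := by
    apply Matrix.eq_zero_of_forall_pow_sum_mul_pow_eq_zero hμ
    intro i
    have := key (i : ℕ)
    convert this using 2 with j
    ring
  funext i
  have := congrFun hd i
  simp only [Pi.zero_apply, mul_eq_zero] at this
  rcases this with h' | h'
  · exact h'
  · exact absurd h' (Complex.exp_ne_zero _)

lemma indep {ι : Type*} [Fintype ι] (μ c : ι → ℂ) (hμ : Function.Injective μ)
    (h : ∀ s ∈ Set.Ioi (0:ℝ), ∑ i, c i * Complex.exp (μ i * s) = 0) : c = 0 := by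
  let e := (Fintype.equivFin ι).symm
  have := indepFin (μ ∘ e) (c ∘ e) (hμ.comp e.injective) (by
    intro s hs
    rw [← h s hs]
    exact Fintype.sum_equiv e _ _ (fun i => rfl))
  funext i
  have := congrFun this (e.symm i)
  simpa using this



/-- For `w_j = a_j + i v_j` with `a_j < 0` and `v_1, …, v_m` pairwise distinct
positive reals, the Gram matrix `G_{j,k} = ∫₀^∞ Re(e^{w_j s}) Re(e^{w_k s}) ds` is
(symmetric) positive definite. -/
theorem stmt_7 (m : ℕ) (hm : 0 < m) (a v : Fin m → ℝ) (ha : ∀ j, a j < 0)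
    (hv : ∀ j, 0 < v j) (hinj : Function.Injective v) :
    (Matrix.of fun j k : Fin m =>
      ∫ s in Set.Ioi (0 : ℝ),
        (Complex.exp (((a j : ℂ) + (v j : ℂ) * Complex.I) * (s : ℂ))).re *
        (Complex.exp (((a k : ℂ) + (v k : ℂ) * Complex.I) * (s : ℂ))).re).PosDef := by
  set f : Fin m → ℝ → ℝ :=
    fun j s => (Complex.exp (((a j : ℂ) + (v j : ℂ) * Complex.I) * (s : ℂ))).re with hf
  have cont : ∀ j, Continuous (f j) := by
    intro j
    apply Complex.continuous_re.comp
    exact Complex.continuous_exp.comp (by continuity)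
  have fbound : ∀ j s, |f j s| ≤ Real.exp (a j * s) := by
    intro j s
    have h1 := Complex.abs_re_le_norm (Complex.exp (((a j : ℂ) + (v j : ℂ) * Complex.I) * (s : ℂ)))
    rw [Complex.norm_exp] at h1
    have : ((((a j : ℂ) + (v j : ℂ) * Complex.I)) * (s : ℂ)).re = a j * s := by
      simp [Complex.mul_re]
    rwa [this] at h1
  have hint : ∀ j k, IntegrableOn (fun s => f j s * f k s) (Set.Ioi (0:ℝ)) := by
    intro j k
    have hb : (0:ℝ) < -(a j + a k) := by have := ha j; have := ha k; linarith
    apply Integrable.mono' (exp_neg_integrableOn_Ioi 0 hb)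
    · exact ((cont j).mul (cont k)).aestronglyMeasurable
    · filter_upwards with s
      have : -(-(a j + a k)) * s = (a j * s) + (a k * s) := by ring
      rw [Real.norm_eq_abs, abs_mul, this, Real.exp_add]
      exact mul_le_mul (fbound j s) (fbound k s) (abs_nonneg _) (Real.exp_pos _).le
  rw [Matrix.posDef_iff_dotProduct_mulVec]
  constructor
  · show _ = _
    ext j k
    simp only [Matrix.conjTranspose_apply, Matrix.of_apply, star, mul_comm, id_eq]
  · intro x hx
    show 0 < dotProduct (star x)
      ((Matrix.of fun j k : Fin m => ∫ s in Set.Ioi (0:ℝ), f j s * f k s).mulVec x)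
    have hxint : ∀ j k : Fin m,
        IntegrableOn (fun s => (x j * f j s) * (x k * f k s)) (Set.Ioi (0:ℝ)) := by
      intro j k
      have heq : (fun s => (x j * f j s) * (x k * f k s))
          = fun s => (x j * x k) * (f j s * f k s) := by funext s; ring
      rw [heq]
      exact (hint j k).const_mul _
    have e1 : ∀ s : ℝ, (∑ j, x j * f j s)^2 = ∑ j, ∑ k, (x j * f j s) * (x k * f k s) := by
      intro s; rw [sq, Finset.sum_mul_sum]
    have expand : dotProduct (star x)
        ((Matrix.of fun j k : Fin m => ∫ s in Set.Ioi (0:ℝ), f j s * f k s).mulVec x)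
        = ∫ s in Set.Ioi (0:ℝ), (∑ j, x j * f j s)^2 := by
      simp only [dotProduct, Matrix.mulVec, Matrix.of_apply, star_trivial]
      simp_rw [e1]
      rw [integral_finset_sum _ (fun j _ => integrable_finset_sum _ (fun k _ => hxint j k))]
      apply Finset.sum_congr rfl
      intro j _
      rw [integral_finset_sum _ (fun k _ => hxint j k), Finset.mul_sum]
      apply Finset.sum_congr rfl
      intro k _
      have heq : (fun s => (x j * f j s) * (x k * f k s))
          = fun s => (x j * x k) * (f j s * f k s) := by funext s; ring
      rw [heq, integral_const_mul]
      ring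
    rw [expand]
    set g : ℝ → ℝ := fun s => ∑ j, x j * f j s with hg
    have gcont : Continuous g :=
      continuous_finset_sum _ (fun j _ => continuous_const.mul (cont j))
    have gint : IntegrableOn (fun s => (g s)^2) (Set.Ioi (0:ℝ)) := by
      have : (fun s => (g s)^2) = fun s => ∑ j, ∑ k, (x j * f j s) * (x k * f k s) :=
        funext e1
      rw [this]
      exact integrable_finset_sum _ (fun j _ => integrable_finset_sum _ (fun k _ => hxint j k))
    have hex : ∃ s₀ ∈ Set.Ioi (0:ℝ), g s₀ ≠ 0 := by
      by_contra hcon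
      push_neg at hcon
      set μ : Fin m ⊕ Fin m → ℂ :=
        Sum.elim (fun j => (a j : ℂ) + (v j : ℂ) * Complex.I)
          (fun j => (a j : ℂ) - (v j : ℂ) * Complex.I) with hμ
      set c : Fin m ⊕ Fin m → ℂ :=
        Sum.elim (fun j => (x j : ℂ)/2) (fun j => (x j : ℂ)/2) with hc
      have hμinj : Function.Injective μ := by
        intro i₁ i₂ hEq
        have him := congrArg Complex.im hEq
        cases i₁ with
        | inl j =>
          cases i₂ with
          | inl k =>
            simp [hμ] at him
            exact congrArg Sum.inl (hinj him)
          | inr k =>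
            simp [hμ] at him
            have := hv j; have := hv k; linarith
        | inr j =>
          cases i₂ with
          | inl k =>
            simp [hμ] at him
            have := hv j; have := hv k; linarith
          | inr k =>
            simp [hμ] at him
            exact congrArg Sum.inr (hinj him)
      have hsum : ∀ s ∈ Set.Ioi (0:ℝ), ∑ i, c i * Complex.exp (μ i * s) = 0 := by
        intro s hs
        have key : ∀ j : Fin m,
            ((x j : ℂ)/2) * Complex.exp (((a j:ℂ) + (v j:ℂ) * Complex.I) * s)
            + ((x j:ℂ)/2) * Complex.exp (((a j:ℂ) - (v j:ℂ) * Complex.I) * s)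
            = ((x j * f j s : ℝ) : ℂ) := by
          intro j
          have hconj : Complex.exp (((a j:ℂ) - (v j:ℂ) * Complex.I) * s)
              = starRingEnd ℂ (Complex.exp (((a j:ℂ) + (v j:ℂ) * Complex.I) * s)) := by
            rw [← Complex.exp_conj]
            congr 1
            simp only [map_mul, map_add, Complex.conj_ofReal, Complex.conj_I]
            ring
          rw [hconj]
          have hz := Complex.add_conj (Complex.exp (((a j:ℂ) + (v j:ℂ) * Complex.I) * s))
          have hstep : ((x j : ℂ)/2) * Complex.exp (((a j:ℂ) + (v j:ℂ) * Complex.I) * s)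
              + ((x j:ℂ)/2) * starRingEnd ℂ (Complex.exp (((a j:ℂ) + (v j:ℂ) * Complex.I) * s))
              = ((x j:ℂ)/2) * (Complex.exp (((a j:ℂ) + (v j:ℂ) * Complex.I) * s)
                + starRingEnd ℂ (Complex.exp (((a j:ℂ) + (v j:ℂ) * Complex.I) * s))) := by ring
          rw [hstep, hz]
          push_cast
          rw [hf]
          ring
        rw [Fintype.sum_sum_type]
        simp only [hc, hμ, Sum.elim_inl, Sum.elim_inr]
        rw [← Finset.sum_add_distrib]
        rw [Finset.sum_congr rfl (fun j _ => key j)]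
        have : (g s : ℂ) = 0 := by rw [hcon s hs]; simp
        rw [← this, hg]
        push_cast
        ring
      have hc0 := indep μ c hμinj hsum
      apply hx
      funext j
      have := congrFun hc0 (Sum.inl j)
      simp only [hc, Sum.elim_inl, Pi.zero_apply, div_eq_zero_iff] at this
      rcases this with h' | h'
      · exact_mod_cast h'
      · norm_num at h'
    obtain ⟨s₀, hs₀, hgs₀⟩ := hex
    rw [integral_pos_iff_support_of_nonneg (fun s => sq_nonneg _) gint]
    have hsupp : (Function.support fun s => (g s)^2) = Function.support g := by
      ext s
      simp [Function.mem_support, pow_eq_zero_iff]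
    rw [hsupp]
    have hopen : IsOpen (Function.support g) := by
      have : Function.support g = g ⁻¹' {0}ᶜ := by
        ext s; simp [Function.mem_support]
      rw [this]
      exact IsOpen.preimage gcont isOpen_compl_singleton
    rw [Measure.restrict_apply' measurableSet_Ioi]
    exact ((hopen.inter isOpen_Ioi).measure_pos volume ⟨s₀, hgs₀, hs₀⟩)
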